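/- Let enc: Σ → Γ⁺ be an encoding (a map into nonempty words with the prefix property) with k₁ = max length and k₂ = min length of codewords. Then η(L)/k₁ ≤ η(enc(L)) ≤ η(L)/k₂ for every language L ⊆ Σ*, where enc is extended to words homomorphically and enc(L) = {enc(w) | w ∈ L}. -/

import Mathlib

open Filter

/-- The `n`-th Myhill–Nerode approximation: `u ~ v` iff all witnesses of length at most `n`
agree. -/
def thetaN {α : Type*} (L : Set (List α)) (n : ℕ) (u v : List α) : Prop :=
  ∀ w : List α, w.length ≤ n → ((u ++ w) ∈ L ↔ (v ++ w) ∈ L)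

/-- The index (number of classes) of `thetaN L n`. -/
noncomputable def indexN {α : Type*} (L : Set (List α)) (n : ℕ) : ℕ :=
  Nat.card (Quot (thetaN L n))

/-- Topological entropy of a language, with values in `[0,∞]`. -/
noncomputable def entropy {α : Type*} (L : Set (List α)) : ENNReal :=
  Filter.limsup (fun n : ℕ => ENNReal.ofReal (Real.logb 2 (indexN L n) / n)) Filter.atTop

/-- Homomorphic extension of a letter-encoding to words. -/
def encWord {α β : Type*} (enc : α → List β) (u : List α) : List β :=
  (u.map enc).flatten

section Aux

variable {α β : Type*}

lemma thetaN_equivalence (L : Set (List α)) (n : ℕ) : Equivalence (thetaN L n) :=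
  ⟨fun _ _ _ => Iff.rfl, fun h w hw => (h w hw).symm, fun h1 h2 w hw => (h1 w hw).trans (h2 w hw)⟩

lemma thetaN_mk_eq {L : Set (List α)} {n : ℕ} {u v : List α} :
    Quot.mk (thetaN L n) u = Quot.mk (thetaN L n) v ↔ thetaN L n u v := by
  rw [Quot.eq]
  exact (thetaN_equivalence L n).eqvGen_iff

lemma finite_quot_thetaN [Finite α] (L : Set (List α)) (n : ℕ) :
    Finite (Quot (thetaN L n)) := by
  have hfin : Finite {w : List α | w.length ≤ n} := (List.finite_length_le α n).to_subtype
  have hinj : Function.Injective (fun q : Quot (thetaN L n) =>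
      (fun w : {w : List α | w.length ≤ n} => (q.out ++ w.1 ∈ L) : _ → Prop)) := by
    intro q q' h
    rw [← q.out_eq, ← q'.out_eq, thetaN_mk_eq]
    intro w hw
    exact iff_of_eq (congrFun h ⟨w, hw⟩)
  exact Finite.of_injective _ hinj

lemma one_le_indexN [Finite α] (L : Set (List α)) (n : ℕ) : 1 ≤ indexN L n := by
  have : Finite (Quot (thetaN L n)) := finite_quot_thetaN L n
  have : Nonempty (Quot (thetaN L n)) := ⟨Quot.mk _ []⟩
  exact Nat.card_pos

variable (enc : α → List β)

lemma encWord_nil : encWord enc [] = [] := rfl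

lemma encWord_cons (a : α) (x : List α) :
    encWord enc (a :: x) = enc a ++ encWord enc x := by
  simp [encWord]

lemma encWord_append (x y : List α) :
    encWord enc (x ++ y) = encWord enc x ++ encWord enc y := by
  simp [encWord]

variable (hpre : ∀ a b : α, a ≠ b → ¬ (enc a <+: enc b))

include hpre in
lemma prefix_of_encWord_prefix (henc : ∀ a, enc a ≠ []) :
    ∀ {x z : List α}, encWord enc x <+: encWord enc z → x <+: z := by
  intro x
  induction x with
  | nil => intro z _; exact z.nil_prefix
  | cons a x' ih =>
    intro z h
    rw [encWord_cons] at h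
    cases z with
    | nil =>
      exfalso
      rw [encWord_nil, List.prefix_nil, List.append_eq_nil_iff] at h
      exact henc a h.1
    | cons b z' =>
      rw [encWord_cons] at h
      have h1 : enc a <+: enc b ++ encWord enc z' :=
        ((enc a).prefix_append (encWord enc x')).trans h
      have h2 : enc b <+: enc b ++ encWord enc z' := (enc b).prefix_append _
      have hab : a = b := by
        by_contra hne
        rcases List.prefix_or_prefix_of_prefix h1 h2 with h' | h'
        · exact hpre a b hne h'
        · exact hpre b a (Ne.symm hne) h'
      subst hab
      rw [List.prefix_append_right_inj] at h
      exact List.cons_prefix_cons.mpr ⟨rfl, ih h⟩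

include hpre in
lemma encWord_injective (henc : ∀ a, enc a ≠ []) :
    Function.Injective (encWord enc) := by
  intro x z h
  have h1 : x <+: z := prefix_of_encWord_prefix enc hpre henc (h ▸ List.prefix_rfl)
  have h2 : z <+: x := prefix_of_encWord_prefix enc hpre henc (h ▸ List.prefix_rfl)
  exact h1.eq_of_length (le_antisymm h1.length_le h2.length_le)

include hpre in
lemma encWord_cancel (henc : ∀ a, enc a ≠ []) {x z : List α} {s : List β}
    (h : encWord enc x ++ s = encWord enc z) :
    ∃ y, z = x ++ y ∧ s = encWord enc y := by
  have hx : x <+: z := prefix_of_encWord_prefix enc hpre henc ⟨s, h⟩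
  obtain ⟨y, rfl⟩ := hx
  refine ⟨y, rfl, ?_⟩
  rw [encWord_append] at h
  exact (List.append_right_inj _).mp h

include hpre in
lemma mem_image_encWord (henc : ∀ a, enc a ≠ []) (L : Set (List α)) (z : List α) :
    encWord enc z ∈ encWord enc '' L ↔ z ∈ L := by
  constructor
  · rintro ⟨x, hx, he⟩
    rwa [encWord_injective enc hpre henc he] at hx
  · exact fun h => ⟨z, h, rfl⟩

lemma encWord_length_le {k₁ : ℕ} (hk : ∀ a, (enc a).length ≤ k₁) (u : List α) :
    (encWord enc u).length ≤ k₁ * u.length := by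
  induction u with
  | nil => simp [encWord_nil]
  | cons a u ih =>
    rw [encWord_cons, List.length_append, List.length_cons, Nat.mul_succ]
    have := hk a
    omega

lemma le_encWord_length {k₂ : ℕ} (hk : ∀ a, k₂ ≤ (enc a).length) (u : List α) :
    k₂ * u.length ≤ (encWord enc u).length := by
  induction u with
  | nil => simp [encWord_nil]
  | cons a u ih =>
    rw [encWord_cons, List.length_append, List.length_cons, Nat.mul_succ]
    have := hk a
    omega

/-- Any prefix of an encoded word decomposes as an encoded word plus a short remainder. -/
lemma exists_decomp {k₁ : ℕ} (hk : ∀ a, (enc a).length ≤ k₁) :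
    ∀ {z : List α} {u : List β}, u <+: encWord enc z →
      ∃ x r, u = encWord enc x ++ r ∧ r.length ≤ k₁ := by
  intro z
  induction z with
  | nil =>
    intro u h
    rw [encWord_nil, List.prefix_nil] at h
    exact ⟨[], [], by simp [encWord_nil, h], Nat.zero_le _⟩
  | cons b z' ih =>
    intro u h
    rw [encWord_cons] at h
    rcases List.prefix_or_prefix_of_prefix h ((enc b).prefix_append _) with h1 | h2
    · exact ⟨[], u, by simp [encWord_nil], h1.length_le.trans (hk b)⟩
    · obtain ⟨u', rfl⟩ := h2
      rw [List.prefix_append_right_inj] at h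
      obtain ⟨x, r, hu', hr⟩ := ih h
      exact ⟨b :: x, r, by rw [encWord_cons, hu', List.append_assoc], hr⟩

include hpre in
lemma indexN_le_encoded [Finite β]
    (henc : ∀ a, enc a ≠ []) {k₁ : ℕ} (hk : ∀ a, (enc a).length ≤ k₁)
    (L : Set (List α)) (n : ℕ) :
    indexN L n ≤ indexN (encWord enc '' L) (k₁ * n) := by
  set M := encWord enc '' L with hM
  haveI : Finite (Quot (thetaN M (k₁ * n))) := finite_quot_thetaN M (k₁ * n)
  apply Nat.card_le_card_of_injective
    (fun q : Quot (thetaN L n) => Quot.mk (thetaN M (k₁ * n)) (encWord enc q.out))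
  intro q q' h
  rw [thetaN_mk_eq] at h
  rw [← q.out_eq, ← q'.out_eq, thetaN_mk_eq]
  intro w hw
  have hlen : (encWord enc w).length ≤ k₁ * n :=
    (encWord_length_le enc hk w).trans (Nat.mul_le_mul_left _ hw)
  have h2 := h (encWord enc w) hlen
  rw [← encWord_append, ← encWord_append] at h2
  rw [← mem_image_encWord enc hpre henc L (q.out ++ w),
    ← mem_image_encWord enc hpre henc L (q'.out ++ w), ← hM]
  exact h2

include hpre in
lemma encoded_indexN_le [Finite α] [Finite β]
    (henc : ∀ a, enc a ≠ []) {k₁ k₂ : ℕ} (hk : ∀ a, (enc a).length ≤ k₁)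
    (hk2 : ∀ a, k₂ ≤ (enc a).length) (hk2pos : 0 < k₂)
    (L : Set (List α)) (n : ℕ) :
    indexN (encWord enc '' L) n ≤
      (1 + Nat.card {r : List β | r.length ≤ k₁}) * indexN L ((k₁ + n) / k₂) := by
  classical
  set M := encWord enc '' L with hM
  set m := (k₁ + n) / k₂ with hm
  haveI hfinR : Finite {r : List β | r.length ≤ k₁} := (List.finite_length_le β k₁).to_subtype
  haveI hfinQ : Finite (Quot (thetaN L m)) := finite_quot_thetaN L m
  -- the classifying map
  set cond : List β → Prop :=
    fun u => ∃ p : List α × List β, u = encWord enc p.1 ++ p.2 ∧ p.2.length ≤ k₁ with hcond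
  set Φ : List β → Option ({r : List β | r.length ≤ k₁} × Quot (thetaN L m)) := fun u =>
    if h : cond u then
      some (⟨h.choose.2, h.choose_spec.2⟩, Quot.mk _ h.choose.1)
    else none with hΦ
  -- one-sided transfer along `thetaN L m`
  have key : ∀ (x x' : List α) (r : List β), r.length ≤ k₁ → thetaN L m x x' →
      ∀ w : List β, w.length ≤ n →
        (encWord enc x ++ r) ++ w ∈ M → (encWord enc x' ++ r) ++ w ∈ M := by
    intro x x' r hr hθ w hw hmem
    obtain ⟨z, hz, hze⟩ := hmem
    rw [List.append_assoc] at hze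
    obtain ⟨y, rfl, hrw⟩ := encWord_cancel enc hpre henc hze.symm
    have hylen : y.length ≤ m := by
      have h1 : k₂ * y.length ≤ (encWord enc y).length := le_encWord_length enc hk2 y
      have h2 : (encWord enc y).length ≤ k₁ + n := by
        rw [← hrw, List.length_append]
        omega
      rw [hm, Nat.le_div_iff_mul_le hk2pos, Nat.mul_comm]
      exact h1.trans h2
    have hx'y : x' ++ y ∈ L := (hθ y hylen).mp hz
    exact ⟨x' ++ y, hx'y, by rw [encWord_append, List.append_assoc, hrw]⟩
  -- words not of the decomposed form are dead
  have hdead : ∀ u : List β, ¬ cond u → ∀ w : List β, u ++ w ∉ M := by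
    intro u hcu w hmem
    obtain ⟨z, _, hze⟩ := hmem
    obtain ⟨x, r, hxr, hrlen⟩ := exists_decomp enc hk (⟨w, hze.symm⟩ : u <+: encWord enc z)
    exact hcu ⟨(x, r), hxr, hrlen⟩
  -- `Φ` classifies `thetaN M n`
  have hΦkey : ∀ u v : List β, Φ u = Φ v → thetaN M n u v := by
    intro u v huv
    by_cases hu : cond u <;> by_cases hv : cond v
    · rw [hΦ] at huv
      simp only [dif_pos hu, dif_pos hv, Option.some.injEq, Prod.mk.injEq,
        Subtype.mk.injEq] at huv
      obtain ⟨hreq, hq⟩ := huv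
      rw [thetaN_mk_eq] at hq
      obtain ⟨hu1, _⟩ := hu.choose_spec
      obtain ⟨hv1, hvr⟩ := hv.choose_spec
      have hur : hu.choose.2.length ≤ k₁ := hu.choose_spec.2
      intro w hw
      constructor
      · intro h
        rw [hu1] at h
        have := key hu.choose.1 hv.choose.1 hu.choose.2 hur hq w hw h
        rw [hreq] at this
        rwa [hv1]
      · intro h
        rw [hv1] at h
        have := key hv.choose.1 hu.choose.1 hv.choose.2 hvr
          ((thetaN_equivalence L m).symm hq) w hw h
        rw [← hreq] at this
        rwa [hu1]
    · exfalso; rw [hΦ] at huv; simp only [dif_pos hu, dif_neg hv] at huv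
      exact Option.some_ne_none _ huv
    · exfalso; rw [hΦ] at huv; simp only [dif_neg hu, dif_pos hv] at huv
      exact Option.some_ne_none _ huv.symm
    · intro w hw
      exact iff_of_false (hdead u hu w) (hdead v hv w)
  -- counting
  haveI : Finite (Quot (thetaN M n)) := finite_quot_thetaN M n
  haveI : Finite (Option ({r : List β | r.length ≤ k₁} × Quot (thetaN L m))) := by
    haveI := Fintype.ofFinite ({r : List β | r.length ≤ k₁} × Quot (thetaN L m))
    infer_instance
  have hcard : indexN M n ≤
      Nat.card (Option ({r : List β | r.length ≤ k₁} × Quot (thetaN L m))) := by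
    apply Nat.card_le_card_of_injective (fun q : Quot (thetaN M n) => Φ q.out)
    intro q q' h
    rw [← q.out_eq, ← q'.out_eq, thetaN_mk_eq]
    exact hΦkey _ _ h
  calc indexN M n
      ≤ Nat.card (Option ({r : List β | r.length ≤ k₁} × Quot (thetaN L m))) := hcard
    _ = Nat.card {r : List β | r.length ≤ k₁} * Nat.card (Quot (thetaN L m)) + 1 := by
        rw [Finite.card_option, Nat.card_prod]
    _ ≤ (1 + Nat.card {r : List β | r.length ≤ k₁}) * indexN L m := by
        have h1 : 1 ≤ indexN L m := one_le_indexN L m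
        have : Nat.card (Quot (thetaN L m)) = indexN L m := rfl
        rw [this, add_mul, one_mul]
        omega

end Aux

theorem entropy_encoding_bounds {α β : Type*} [Fintype α] [Fintype β]
    (enc : α → List β) (henc : ∀ a, enc a ≠ [])
    (hpre : ∀ a b : α, a ≠ b → ¬ (enc a <+: enc b))
    (k₁ k₂ : ℕ)
    (hk₁ : IsGreatest (Set.range fun a => (enc a).length) k₁)
    (hk₂ : IsLeast (Set.range fun a => (enc a).length) k₂)
    (L : Set (List α)) :
    entropy L / (k₁ : ENNReal) ≤ entropy (encWord enc '' L) ∧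
      entropy (encWord enc '' L) ≤ entropy L / (k₂ : ENNReal) := by
  classical
  have hk1le : ∀ a, (enc a).length ≤ k₁ := fun a => hk₁.2 ⟨a, rfl⟩
  have hk2le : ∀ a, k₂ ≤ (enc a).length := fun a => hk₂.2 ⟨a, rfl⟩
  obtain ⟨a₀, ha₀⟩ := hk₂.1
  have hk2pos : 0 < k₂ := by
    rw [← ha₀]
    exact List.length_pos_iff.mpr (henc a₀)
  have hk1pos : 0 < k₁ := lt_of_lt_of_le hk2pos ((ha₀ ▸ hk1le a₀ : k₂ ≤ k₁))
  set M := encWord enc '' L with hM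
  set f : ℕ → ℝ := fun n => Real.logb 2 (indexN L n) with hf
  set g : ℕ → ℝ := fun n => Real.logb 2 (indexN M n) with hg
  set eL : ℕ → ENNReal := fun n => ENNReal.ofReal (f n / n) with heLdef
  set eM : ℕ → ENNReal := fun n => ENNReal.ofReal (g n / n) with heMdef
  have heL : entropy L = limsup eL atTop := rfl
  have heM : entropy M = limsup eM atTop := rfl
  have hone : (1 : ℝ) < 2 := one_lt_two
  have hLpos : ∀ n, (0 : ℝ) < (indexN L n : ℝ) := fun n => by
    exact_mod_cast one_le_indexN L n
  have hMpos : ∀ n, (0 : ℝ) < (indexN M n : ℝ) := fun n => by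
    exact_mod_cast one_le_indexN M n
  have hg0 : ∀ n, 0 ≤ g n := fun n =>
    Real.logb_nonneg hone (by exact_mod_cast one_le_indexN M n)
  constructor
  · -- lower bound
    have hidx : ∀ n, indexN L n ≤ indexN M (k₁ * n) := fun n =>
      indexN_le_encoded enc hpre henc hk1le L n
    have hpoint : ∀ n : ℕ, 1 ≤ n → eL n ≤ (k₁ : ENNReal) * eM (k₁ * n) := by
      intro n hn
      have h1 : f n ≤ g (k₁ * n) :=
        Real.logb_le_logb_of_le hone (hLpos n) (by exact_mod_cast hidx n)
      have hn0 : (0 : ℝ) < n := by exact_mod_cast hn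
      have hk0 : (0 : ℝ) < k₁ := by exact_mod_cast hk1pos
      have heq : (k₁ : ℝ) * (g (k₁ * n) / ((k₁ * n : ℕ) : ℝ)) = g (k₁ * n) / n := by
        have hcast : ((k₁ * n : ℕ) : ℝ) = (k₁ : ℝ) * n := by push_cast; ring
        rw [hcast]
        field_simp
      rw [heLdef, heMdef]
      simp only []
      rw [← ENNReal.ofReal_natCast k₁, ← ENNReal.ofReal_mul (by positivity)]
      apply ENNReal.ofReal_le_ofReal
      rw [heq]
      gcongr
    have step1 : entropy L ≤ limsup (fun n : ℕ => (k₁ : ENNReal) * eM (k₁ * n)) atTop := by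
      rw [heL]
      have hevp : eL ≤ᶠ[atTop] fun n : ℕ => (k₁ : ENNReal) * eM (k₁ * n) := by
        filter_upwards [eventually_ge_atTop 1] with n hn using hpoint n hn
      exact limsup_le_limsup hevp
    have step2 : limsup (fun n : ℕ => (k₁ : ENNReal) * eM (k₁ * n)) atTop
        = (k₁ : ENNReal) * limsup (fun n : ℕ => eM (k₁ * n)) atTop :=
      ENNReal.limsup_const_mul_of_ne_top (ENNReal.natCast_ne_top k₁)
    have step3 : limsup (fun n : ℕ => eM (k₁ * n)) atTop ≤ limsup eM atTop := by
      have hφ : Tendsto (fun n : ℕ => k₁ * n) atTop atTop :=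
        tendsto_atTop_mono (fun n => Nat.le_mul_of_pos_left n hk1pos) tendsto_id
      calc limsup (fun n : ℕ => eM (k₁ * n)) atTop
          = limsup eM (map (fun n : ℕ => k₁ * n) atTop) :=
            limsup_comp eM (fun n : ℕ => k₁ * n) atTop
        _ ≤ limsup eM atTop := limsup_le_limsup_of_le hφ
    have hfinal : entropy L ≤ entropy M * (k₁ : ENNReal) := by
      rw [mul_comm, heM]
      calc entropy L ≤ _ := step1
        _ = (k₁ : ENNReal) * limsup (fun n : ℕ => eM (k₁ * n)) atTop := step2
        _ ≤ (k₁ : ENNReal) * limsup eM atTop := by gcongr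
    exact ENNReal.div_le_of_le_mul hfinal
  · -- upper bound
    rw [ENNReal.le_div_iff_mul_le (Or.inl (by exact_mod_cast hk2pos.ne'))
      (Or.inl (ENNReal.natCast_ne_top k₂))]
    have hmulrw : entropy M * (k₂ : ENNReal)
        = limsup (fun n : ℕ => (k₂ : ENNReal) * eM n) atTop := by
      rw [ENNReal.limsup_const_mul_of_ne_top (ENNReal.natCast_ne_top k₂), ← heM, mul_comm]
    rw [hmulrw]
    apply ENNReal.le_of_forall_pos_le_add
    intro ε hε hEtop
    have hEne : entropy L ≠ ⊤ := hEtop.ne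
    have hEε : entropy L < entropy L + ε :=
      ENNReal.lt_add_right hEne (by exact_mod_cast hε.ne')
    have hEεne : entropy L + (ε : ENNReal) ≠ ⊤ :=
      ENNReal.add_ne_top.mpr ⟨hEne, ENNReal.coe_ne_top⟩
    set C := (entropy L + ε).toReal with hC
    have hC0 : 0 ≤ C := ENNReal.toReal_nonneg
    have hev : ∀ᶠ j in atTop, eL j < entropy L + ε :=
      eventually_lt_of_limsup_lt (lt_of_le_of_lt (le_of_eq heL.symm) hEε)
    obtain ⟨N, hN⟩ := eventually_atTop.mp hev
    have hfC : ∀ j, N ≤ j → 1 ≤ j → f j ≤ C * j := by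
      intro j hj hj1
      have h1 : ENNReal.ofReal (f j / j) ≤ entropy L + ε := (hN j hj).le
      have h2 : f j / j ≤ C := by
        rw [ENNReal.ofReal_le_iff_le_toReal hEεne] at h1
        exact h1
      have hj0 : (0 : ℝ) < j := by exact_mod_cast hj1
      calc f j = f j / j * j := (div_mul_cancel₀ _ hj0.ne').symm
        _ ≤ C * j := mul_le_mul_of_nonneg_right h2 hj0.le
    set R := Nat.card {r : List β | r.length ≤ k₁} with hR
    set B := Real.logb 2 ((1 + R : ℕ) : ℝ) with hB
    have hB0 : 0 ≤ B := Real.logb_nonneg hone (by exact_mod_cast Nat.le_add_right 1 R)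
    set D := (k₂ : ℝ) * B + C * k₁ with hD
    have hidxU : ∀ n, indexN M n ≤ (1 + R) * indexN L ((k₁ + n) / k₂) := fun n =>
      encoded_indexN_le enc hpre henc hk1le hk2le hk2pos L n
    have hgB : ∀ n, g n ≤ B + f ((k₁ + n) / k₂) := by
      intro n
      have h2 : ((indexN M n : ℕ) : ℝ) ≤ (((1 + R) * indexN L ((k₁ + n) / k₂) : ℕ) : ℝ) := by
        exact_mod_cast hidxU n
      have h3 := Real.logb_le_logb_of_le hone (hMpos n) h2
      rwa [Nat.cast_mul,
        Real.logb_mul (by positivity) (hLpos ((k₁ + n) / k₂)).ne'] at h3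
    have hevb : ∀ᶠ n : ℕ in atTop,
        (k₂ : ENNReal) * eM n ≤ ENNReal.ofReal (C + D / n) := by
      filter_upwards [eventually_ge_atTop (max N 1 * k₂)] with n hn
      have hn1 : 1 ≤ n := by
        have hpos : 0 < max N 1 * k₂ :=
          Nat.mul_pos (lt_of_lt_of_le Nat.one_pos (le_max_right N 1)) hk2pos
        omega
      set m := (k₁ + n) / k₂ with hm
      have hmN : max N 1 ≤ m := by
        rw [hm, Nat.le_div_iff_mul_le hk2pos]
        calc max N 1 * k₂ ≤ n := hn
          _ ≤ k₁ + n := Nat.le_add_left _ _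
      have hfm : f m ≤ C * m :=
        hfC m (le_trans (le_max_left _ _) hmN) (le_trans (le_max_right _ _) hmN)
      have hgn : g n ≤ B + C * m := le_trans (hgB n) (by linarith)
      have hmk : (k₂ : ℝ) * m ≤ k₁ + n := by
        have h' : k₂ * m ≤ k₁ + n := by
          rw [hm, Nat.mul_comm]
          exact Nat.div_mul_le_self _ _
        exact_mod_cast h'
      have hn0 : (0 : ℝ) < n := by exact_mod_cast hn1
      have hreal : (k₂ : ℝ) * (g n / n) ≤ C + D / n := by
        have hrw : (k₂ : ℝ) * (g n / n) = (k₂ : ℝ) * g n / n := by ring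
        rw [hrw, div_le_iff₀ hn0]
        have hrhs : (C + D / n) * n = C * n + D := by field_simp
        rw [hrhs]
        have hk2r : (0 : ℝ) ≤ k₂ := by positivity
        nlinarith [mul_le_mul_of_nonneg_left hgn hk2r, mul_le_mul_of_nonneg_left hmk hC0]
      have hrw2 : (k₂ : ENNReal) * eM n = ENNReal.ofReal ((k₂ : ℝ) * (g n / n)) := by
        rw [heMdef]
        simp only []
        rw [ENNReal.ofReal_mul (by positivity), ENNReal.ofReal_natCast]
      rw [hrw2]
      exact ENNReal.ofReal_le_ofReal hreal
    have hlim : Tendsto (fun n : ℕ => ENNReal.ofReal (C + D / n)) atTop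
        (nhds (ENNReal.ofReal C)) := by
      apply ENNReal.tendsto_ofReal
      have h0 := tendsto_const_div_atTop_nhds_zero_nat D
      have hconst : Tendsto (fun _ : ℕ => C) atTop (nhds C) := tendsto_const_nhds
      simpa using hconst.add h0
    calc limsup (fun n : ℕ => (k₂ : ENNReal) * eM n) atTop
        ≤ limsup (fun n : ℕ => ENNReal.ofReal (C + D / n)) atTop := limsup_le_limsup hevb
      _ = ENNReal.ofReal C := hlim.limsup_eq
      _ = entropy L + ε := ENNReal.ofReal_toReal hEεne
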